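/- Let τ̄ ≤ −1 and let a : (−∞, τ̄] → ℝ be continuously differentiable. Suppose there exist constants C ≥ 0, ε ∈ (0, 1) and a function η : (−∞, τ̄] → [0, ∞) with η(τ) → 0 as τ → −∞ such that |a'(τ) − a(τ) + (1/√2)·e^τ| ≤ C·e^{ετ}·|a(τ)| + η(τ)·e^τ for all τ ≤ τ̄. Then lim_{τ → −∞} a(τ)/(τ·e^τ) = −1/√2; equivalently, a(τ) = −(1/√2)·τ·e^τ + o(|τ|·e^τ) as τ → −∞. -/

import Mathlib

open Filter

section AuxODE
open Set Real

/-- Auxiliary: if `b' = -c2 + O(e^{ετ})|b| + η(τ)` on `(-∞, T0]` with `η → 0` at `-∞`,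
then `b τ / τ → -c2` as `τ → -∞`. -/
theorem aux_ode (T0 : ℝ) (hT0 : T0 ≤ -1) (b db η : ℝ → ℝ) (C ε c2 : ℝ)
    (hC : 0 ≤ C) (hε0 : 0 < ε) (hc2 : 0 < c2)
    (hbd : ∀ τ ≤ T0, HasDerivAt b (db τ) τ)
    (hdbc : ContinuousOn db (Iic T0))
    (hη0 : ∀ τ ≤ T0, 0 ≤ η τ)
    (hηlim : Tendsto η atBot (nhds 0))
    (hkey : ∀ τ ≤ T0, |db τ + c2| ≤ C * Real.exp (ε * τ) * |b τ| + η τ) :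
    Tendsto (fun τ => b τ / τ) atBot (nhds (-c2)) := by
  set K : ℝ := ε / 2 with hK
  have hKpos : 0 < K := by positivity
  -- choose T with η ≤ 1 and C e^{εs} ≤ K for s ≤ T
  have hev1 : ∀ᶠ s in atBot, η s ≤ 1 := by
    have := hηlim.eventually (eventually_le_nhds (show (0:ℝ) < 1 by norm_num))
    exact this
  have hev2 : ∀ᶠ s in atBot, C * Real.exp (ε * s) ≤ K := by
    have h1 : Tendsto (fun s : ℝ => ε * s) atBot atBot :=
      tendsto_id.const_mul_atBot hε0
    have h2 : Tendsto (fun s : ℝ => C * Real.exp (ε * s)) atBot (nhds (C * 0)) :=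
      (Real.tendsto_exp_atBot.comp h1).const_mul C
    rw [mul_zero] at h2
    exact h2.eventually (eventually_le_nhds hKpos)
  obtain ⟨T, hT⟩ := eventually_atBot.mp ((hev1.and hev2).and (eventually_le_atBot T0))
  have hTle : T ≤ T0 := (hT T le_rfl).2
  -- Grönwall on (-∞, T]
  have hbcont : ContinuousOn b (Iic T0) := fun τ hτ =>
    ((hbd τ hτ).continuousAt).continuousWithinAt
  set c : ℝ := c2 + 1 with hc
  set B : ℝ := |b T| + c / K with hB
  have hBpos : 0 < B := by positivity
  have hA : ∀ τ ≤ T, |b τ| ≤ B * Real.exp (K * (T - τ)) := by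
    intro τ hτ
    set L : ℝ := T - τ with hL
    have hL0 : 0 ≤ L := by simp [hL]; linarith
    have hmem : ∀ t ∈ Icc (0:ℝ) L, T - t ≤ T0 := by
      intro t ht; have := ht.1; linarith [hTle]
    have hg : ContinuousOn (fun t => b (T - t)) (Icc 0 L) := by
      apply hbcont.comp (by fun_prop)
      intro t ht; exact hmem t ht
    have hg' : ∀ t ∈ Ico (0:ℝ) L, HasDerivWithinAt (fun t => b (T - t))
        ((fun t => -db (T - t)) t) (Ici t) t := by
      intro t ht
      have h1 : HasDerivAt (fun t : ℝ => T - t) (-1) t := by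
        simpa using (hasDerivAt_id' t).const_sub T
      have h2 := (hbd (T - t) (hmem t ⟨ht.1, ht.2.le⟩)).comp t h1
      simpa [mul_comm, Function.comp_def] using h2.hasDerivWithinAt
    have hbound : ∀ t ∈ Ico (0:ℝ) L, ‖(fun t => -db (T - t)) t‖ ≤ K * ‖b (T - t)‖ + c := by
      intro t ht
      have hst : T - t ≤ T0 := hmem t ⟨ht.1, ht.2.le⟩
      have hsT : T - t ≤ T := by linarith [ht.1]
      have h1 := hkey (T - t) hst
      have h2 : C * Real.exp (ε * (T - t)) ≤ K := by
        have := (hT (T - t) hsT).1.2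
        exact this
      have h3 : η (T - t) ≤ 1 := (hT (T - t) hsT).1.1
      have h4 : |db (T - t)| ≤ |db (T - t) + c2| + c2 := by
        have h := abs_add_le (db (T - t) + c2) (-c2)
        simp only [add_neg_cancel_right, abs_neg, abs_of_pos hc2] at h
        exact h
      have h6 : C * Real.exp (ε * (T - t)) * |b (T - t)| ≤ K * |b (T - t)| :=
        mul_le_mul_of_nonneg_right h2 (abs_nonneg _)
      simp only [Real.norm_eq_abs, abs_neg]
      calc |db (T - t)| ≤ |db (T - t) + c2| + c2 := h4
        _ ≤ C * Real.exp (ε * (T - t)) * |b (T - t)| + η (T - t) + c2 := by linarith [h1]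
        _ ≤ K * |b (T - t)| + c := by simp only [hc]; linarith
    have hga : ‖(fun t => b (T - t)) (0:ℝ)‖ ≤ |b T| := by
      simp [Real.norm_eq_abs]
    have := norm_le_gronwallBound_of_norm_deriv_right_le hg hg' hga hbound L ⟨hL0, le_rfl⟩
    rw [sub_zero] at this
    have heq : gronwallBound (|b T|) K c L ≤ B * Real.exp (K * L) := by
      rw [gronwallBound_of_K_ne_0 hKpos.ne']
      have h1 : (1:ℝ) ≤ Real.exp (K * L) := by
        rw [Real.one_le_exp_iff]; positivity
      have h2 : 0 < c / K := by positivity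
      have h3 : c / K * (Real.exp (K * L) - 1) ≤ c / K * Real.exp (K * L) :=
        mul_le_mul_of_nonneg_left (by linarith) h2.le
      calc |b T| * Real.exp (K * L) + c / K * (Real.exp (K * L) - 1)
          ≤ |b T| * Real.exp (K * L) + c / K * Real.exp (K * L) := by linarith
        _ = B * Real.exp (K * L) := by rw [hB]; ring
    calc |b τ| = ‖(fun t => b (T - t)) L‖ := by simp [hL, Real.norm_eq_abs]
      _ ≤ gronwallBound (|b T|) K c L := this
      _ ≤ B * Real.exp (K * L) := heq
  -- improved bound on the drift
  set B1 : ℝ := C * B * Real.exp (K * T) with hB1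
  have hB1nn : 0 ≤ B1 := by positivity
  have hdrift : ∀ s ≤ T, |db s + c2| ≤ B1 * Real.exp (K * s) + η s := by
    intro s hs
    have h1 := hkey s (hs.trans hTle)
    have h2 : C * Real.exp (ε * s) * |b s| ≤ B1 * Real.exp (K * s) := by
      have h3 := hA s hs
      have h4 : C * Real.exp (ε * s) * |b s| ≤ C * Real.exp (ε * s) * (B * Real.exp (K * (T - s))) :=
        mul_le_mul_of_nonneg_left h3 (by positivity)
      have h5 : C * Real.exp (ε * s) * (B * Real.exp (K * (T - s))) = B1 * Real.exp (K * s) := by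
        have he : Real.exp (ε * s) * Real.exp (K * (T - s))
            = Real.exp (K * T) * Real.exp (K * s) := by
          rw [← Real.exp_add, ← Real.exp_add]; congr 1; rw [hK]; ring
        calc C * Real.exp (ε * s) * (B * Real.exp (K * (T - s)))
            = C * B * (Real.exp (ε * s) * Real.exp (K * (T - s))) := by ring
          _ = C * B * (Real.exp (K * T) * Real.exp (K * s)) := by rw [he]
          _ = B1 * Real.exp (K * s) := by rw [hB1]; ring
      linarith [h4, h5.le]
    linarith
  -- FTC identity
  have hFTC : ∀ τ' T', τ' ≤ T' → T' ≤ T →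
      ∫ s in τ'..T', (db s + c2) = (b T' + c2 * T') - (b τ' + c2 * τ') := by
    intro τ' T' h1 h2
    have hsub : uIcc τ' T' ⊆ Iic T0 := by
      rw [uIcc_of_le h1]
      intro x hx
      exact le_trans hx.2 (h2.trans hTle)
    apply intervalIntegral.integral_eq_sub_of_hasDerivAt
    · intro t ht
      have h3 : HasDerivAt (fun s => b s + c2 * s) (db t + c2) t := by
        have h := (hbd t (hsub ht)).add ((hasDerivAt_id' t).const_mul c2)
        rw [mul_one] at h
        exact h
      exact h3
    · exact (((hdbc.mono hsub).add continuousOn_const)).intervalIntegrable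
  -- final limit
  rw [Metric.tendsto_nhds]
  intro δ' hδ'
  set δ : ℝ := δ' / 4 with hδ
  have hδpos : 0 < δ := by positivity
  obtain ⟨T', hT'⟩ := eventually_atBot.mp
    ((hηlim.eventually (eventually_le_nhds hδpos)).and (eventually_le_atBot T))
  have hT'T : T' ≤ T := (hT' T' le_rfl).2
  have hT'neg : T' ≤ -1 := le_trans (hT'T.trans hTle) hT0
  set M : ℝ := |b T' + c2 * T'| + B1 / K * Real.exp (K * T') with hM
  have hMnn : 0 ≤ M := by positivity
  have hlin : ∀ τ ≤ T', |b τ + c2 * τ| ≤ M + δ * (T' - τ) := by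
    intro τ hτ
    have hI := hFTC τ T' hτ hT'T
    -- bound |∫ (db+c2)|
    have hcont1 : ContinuousOn (fun s => db s + c2) (uIcc τ T') := by
      rw [uIcc_of_le hτ]
      apply (hdbc.mono ?_).add continuousOn_const
      intro x hx; exact le_trans hx.2 (hT'T.trans hTle)
    have hint1 : IntervalIntegrable (fun s => db s + c2) MeasureTheory.volume τ T' :=
      hcont1.intervalIntegrable
    have hint2 : IntervalIntegrable (fun s => |db s + c2|) MeasureTheory.volume τ T' :=
      (hcont1.abs).intervalIntegrable
    have hint3 : IntervalIntegrable (fun s => B1 * Real.exp (K * s) + δ)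
        MeasureTheory.volume τ T' := by
      apply Continuous.intervalIntegrable; fun_prop
    have hmono : ∫ s in τ..T', |db s + c2| ≤ ∫ s in τ..T', (B1 * Real.exp (K * s) + δ) := by
      apply intervalIntegral.integral_mono_on hτ hint2 hint3
      intro x hx
      have h1 := hdrift x (le_trans hx.2 hT'T)
      have h2 : η x ≤ δ := (hT' x (hx.2)).1
      linarith
    have hcomp : ∫ s in τ..T', (B1 * Real.exp (K * s) + δ)
        = (B1 / K * Real.exp (K * T') + δ * T') - (B1 / K * Real.exp (K * τ) + δ * τ) := by
      apply intervalIntegral.integral_eq_sub_of_hasDerivAt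
      · intro t _
        have hx : HasDerivAt (fun s => Real.exp (K * s)) (Real.exp (K * t) * K) t := by
          simpa [Function.comp_def] using (Real.hasDerivAt_exp (K * t)).comp t ((hasDerivAt_id t).const_mul K)
        have h1 : HasDerivAt (fun s => B1 / K * Real.exp (K * s) + δ * s)
            (B1 / K * (Real.exp (K * t) * K) + δ) t := by
          apply HasDerivAt.add (hx.const_mul (B1 / K))
          simpa using (hasDerivAt_id t).const_mul δ
        have h2 : B1 / K * (Real.exp (K * t) * K) + δ = B1 * Real.exp (K * t) + δ := by
          field_simp
        rwa [h2] at h1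
      · apply Continuous.intervalIntegrable; fun_prop
    have habs : |∫ s in τ..T', (db s + c2)| ≤ ∫ s in τ..T', |db s + c2| := by
      have := intervalIntegral.abs_integral_le_integral_abs hτ (f := fun s => db s + c2)
        (μ := MeasureTheory.volume)
      exact this
    have hexp : 0 < Real.exp (K * τ) := Real.exp_pos _
    have : |∫ s in τ..T', (db s + c2)| ≤ B1 / K * Real.exp (K * T') + δ * (T' - τ) := by
      rw [hcomp] at hmono
      have h5 : 0 < B1 / K * Real.exp (K * τ) + 0 ∨ True := Or.inr trivial
      nlinarith [mul_le_mul_of_nonneg_left hexp.le (div_nonneg hB1nn hKpos.le)]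
    have h8 : b τ + c2 * τ = (b T' + c2 * T') - ∫ s in τ..T', (db s + c2) := by
      rw [hI]; ring
    calc |b τ + c2 * τ| ≤ |b T' + c2 * T'| + |∫ s in τ..T', (db s + c2)| := by
          rw [h8, sub_eq_add_neg]
          exact (abs_add_le _ _).trans (by rw [abs_neg])
      _ ≤ |b T' + c2 * T'| + (B1 / K * Real.exp (K * T') + δ * (T' - τ)) := by linarith
      _ = M + δ * (T' - τ) := by rw [hM]; ring
  -- conclude
  filter_upwards [eventually_le_atBot T', eventually_le_atBot (-(M / δ) - 1)] with τ h1 h2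
  have hτneg : τ < 0 := by linarith [hT'neg]
  have h3 := hlin τ h1
  rw [Real.dist_eq]
  have hτ0 : τ ≠ 0 := ne_of_lt hτneg
  have h4 : b τ / τ - -c2 = (b τ + c2 * τ) / τ := by
    field_simp; ring
  rw [h4, abs_div, abs_of_neg hτneg]
  rw [div_lt_iff₀ (by linarith : (0:ℝ) < -τ)]
  have h5 : δ * (T' - τ) ≤ δ * (-τ) := by
    apply mul_le_mul_of_nonneg_left _ hδpos.le
    linarith [hT'neg]
  have h6 : M ≤ δ * (-τ) := by
    rw [← div_le_iff₀' hδpos] at *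
    · linarith [h2]
  have h7 : 2 * δ < δ' := by rw [hδ]; linarith
  calc |b τ + c2 * τ| ≤ M + δ * (T' - τ) := h3
    _ ≤ δ * (-τ) + δ * (-τ) := by linarith
    _ = 2 * δ * (-τ) := by ring
    _ < δ' * (-τ) := by
        apply mul_lt_mul_of_pos_right h7
        linarith


end AuxODE

/-- The linear ODE asymptotics of Section 6: a'(τ) = a(τ) − (1/√2 + o(1))e^τ + O(e^{ετ})a(τ)
integrates to a(τ) = −(1/√2)·τ·e^τ + o(|τ|e^τ), i.e. a(τ)/(τe^τ) → −1/√2. -/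
theorem positive_mode_ode_asymptotics
    (τb : ℝ) (hτb : τb ≤ -1)
    (a η : ℝ → ℝ) (C ε : ℝ)
    (hC : 0 ≤ C) (hε : ε ∈ Set.Ioo (0:ℝ) 1)
    (hdiff : ∀ τ ≤ τb, DifferentiableAt ℝ a τ)
    (hderiv_cont : ContinuousOn (deriv a) (Set.Iic τb))
    (hη_nonneg : ∀ τ ≤ τb, 0 ≤ η τ)
    (hη_lim : Tendsto η atBot (nhds 0))
    (hmain : ∀ τ ≤ τb,
      |deriv a τ - a τ + (1 / Real.sqrt 2) * Real.exp τ|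
        ≤ C * Real.exp (ε * τ) * |a τ| + η τ * Real.exp τ) :
    Tendsto (fun τ => a τ / (τ * Real.exp τ)) atBot (nhds (-(1 / Real.sqrt 2))) := by
  set c2 : ℝ := 1 / Real.sqrt 2 with hc2
  have hc2pos : 0 < c2 := by
    rw [hc2]; positivity
  set b : ℝ → ℝ := fun τ => a τ * Real.exp (-τ) with hb
  set db : ℝ → ℝ := fun τ => (deriv a τ - a τ) * Real.exp (-τ) with hdb
  have hbd : ∀ τ ≤ τb, HasDerivAt b (db τ) τ := by
    intro τ hτ
    have h1 : HasDerivAt a (deriv a τ) τ := (hdiff τ hτ).hasDerivAt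
    have h2 : HasDerivAt (fun τ : ℝ => Real.exp (-τ)) (-Real.exp (-τ)) τ := by
      simpa [Function.comp_def] using (Real.hasDerivAt_exp (-τ)).comp τ ((hasDerivAt_id τ).neg)
    have h3 := h1.mul h2
    have h4 : deriv a τ * Real.exp (-τ) + a τ * -Real.exp (-τ) = db τ := by
      rw [hdb]; ring
    rw [hb]
    exact h4 ▸ h3
  have hacont : ContinuousOn a (Set.Iic τb) := fun τ hτ =>
    ((hdiff τ hτ).continuousAt).continuousWithinAt
  have hdbc : ContinuousOn db (Set.Iic τb) := by
    rw [hdb]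
    exact (hderiv_cont.sub hacont).mul
      ((Real.continuous_exp.comp continuous_neg).continuousOn)
  have hkey : ∀ τ ≤ τb, |db τ + c2| ≤ C * Real.exp (ε * τ) * |b τ| + η τ := by
    intro τ hτ
    have h := hmain τ hτ
    have hee : Real.exp τ * Real.exp (-τ) = 1 := by
      rw [← Real.exp_add]; simp
    have e1 : |db τ + c2| = |deriv a τ - a τ + c2 * Real.exp τ| * Real.exp (-τ) := by
      rw [← abs_of_pos (Real.exp_pos (-τ)), ← abs_mul]
      congr 1
      calc db τ + c2 = (deriv a τ - a τ) * Real.exp (-τ)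
            + c2 * (Real.exp τ * Real.exp (-τ)) := by rw [hdb, hee]; ring
        _ = (deriv a τ - a τ + c2 * Real.exp τ) * Real.exp (-τ) := by ring
    have e2 : (C * Real.exp (ε * τ) * |a τ| + η τ * Real.exp τ) * Real.exp (-τ)
        = C * Real.exp (ε * τ) * |b τ| + η τ := by
      have hba : |b τ| = |a τ| * Real.exp (-τ) := by
        rw [hb, abs_mul, abs_of_pos (Real.exp_pos (-τ))]
      calc (C * Real.exp (ε * τ) * |a τ| + η τ * Real.exp τ) * Real.exp (-τ)
          = C * Real.exp (ε * τ) * (|a τ| * Real.exp (-τ))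
            + η τ * (Real.exp τ * Real.exp (-τ)) := by ring
        _ = C * Real.exp (ε * τ) * |b τ| + η τ := by rw [hee, ← hba]; ring
    rw [e1, ← e2]
    exact mul_le_mul_of_nonneg_right h (Real.exp_pos (-τ)).le
  have hlim := aux_ode τb hτb b db η C ε c2 hC hε.1 hc2pos hbd hdbc hη_nonneg hη_lim hkey
  have heq : ∀ τ : ℝ, a τ / (τ * Real.exp τ) = b τ / τ := by
    intro τ
    rw [hb]
    simp only
    rw [Real.exp_neg, mul_comm τ (Real.exp τ), ← div_div, div_eq_mul_inv]
    ring
  exact Tendsto.congr (fun τ => (heq τ).symm) hlim
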